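/- For every h ∈ H one has σ([ω,h] ⊗ 1) = h ⊗ 1; in particular, σ is a retraction of the map H ⊗ ℤ/2ℤ → 𝔏₃ ⊗ ℤ/2ℤ induced by h ↦ [ω,h]. -/

import Mathlib

open scoped TensorProduct

noncomputable section

/-- The free Lie ring `𝔏` on the `2g` generators. -/
abbrev L (g : ℕ) : Type := FreeLieAlgebra ℤ (Fin (2 * g))

/-- The free abelian group `H` of rank `2g`. -/
abbrev H (g : ℕ) : Type := Fin (2 * g) → ℤ

/-- The canonical inclusion of `H` into `𝔏` as the degree `1` part. -/
def toL (g : ℕ) : H g →ₗ[ℤ] L g where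
  toFun v := ∑ i, v i • FreeLieAlgebra.of ℤ i
  map_add' x y := by simp [add_smul, Finset.sum_add_distrib]
  map_smul' c x := by simp [Finset.smul_sum, smul_smul]

/-- Index of the basis element `aᵢ`. -/
def aIdx (g : ℕ) (i : Fin g) : Fin (2 * g) := ⟨i.1, by have := i.2; omega⟩

/-- Index of the basis element `bᵢ`. -/
def bIdx (g : ℕ) (i : Fin g) : Fin (2 * g) := ⟨g + i.1, by have := i.2; omega⟩

/-- The basis element `aᵢ` of `H`. -/
def aV (g : ℕ) (i : Fin g) : H g := Pi.single (aIdx g i) 1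

/-- The basis element `bᵢ` of `H`. -/
def bV (g : ℕ) (i : Fin g) : H g := Pi.single (bIdx g i) 1

/-- The symplectic pairing `ω : H × H → ℤ`, with `ω(aᵢ,bⱼ) = δᵢⱼ`, `ω(aᵢ,aⱼ) = ω(bᵢ,bⱼ) = 0`. -/
def omegaPair (g : ℕ) (x y : H g) : ℤ :=
  ∑ i : Fin g, (x (aIdx g i) * y (bIdx g i) - x (bIdx g i) * y (aIdx g i))

/-- `IsBrkt g k x` means that `x` is a `k`-fold Lie bracket of elements of `H`. -/
inductive IsBrkt (g : ℕ) : ℕ → L g → Prop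
  | of (v : H g) : IsBrkt g 1 (toL g v)
  | lie {m n : ℕ} {x y : L g} : IsBrkt g m x → IsBrkt g n y → IsBrkt g (m + n) ⁅x, y⁆

/-- `𝔏ₖ`, the degree-`k` homogeneous component of the free Lie ring:
the `ℤ`-span of all `k`-fold Lie brackets of elements of `H`. -/
def homog (g k : ℕ) : Submodule ℤ (L g) := Submodule.span ℤ {x | IsBrkt g k x}

lemma toL_mem (g : ℕ) (v : H g) : toL g v ∈ homog g 1 :=
  Submodule.subset_span (IsBrkt.of v)

lemma lie_mem_homog {g m n : ℕ} {x y : L g} (hx : x ∈ homog g m) (hy : y ∈ homog g n) :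
    ⁅x, y⁆ ∈ homog g (m + n) := by
  induction hx using Submodule.span_induction with
  | mem a ha =>
    induction hy using Submodule.span_induction with
    | mem b hb => exact Submodule.subset_span (ha.lie hb)
    | zero => simp
    | add b c hb hc ihb ihc => rw [lie_add]; exact Submodule.add_mem _ ihb ihc
    | smul t b hb ihb => rw [lie_smul]; exact Submodule.smul_mem _ t ihb
  | zero => simp
  | add a c ha hc iha ihc => rw [add_lie]; exact Submodule.add_mem _ iha ihc
  | smul t a ha iha => rw [smul_lie]; exact Submodule.smul_mem _ t iha

/-- `[[a,b],c]` as an element of `𝔏₃`. -/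
def trip (g : ℕ) (a b c : H g) : ↥(homog g 3) :=
  ⟨⁅⁅toL g a, toL g b⁆, toL g c⁆,
    Submodule.subset_span (((IsBrkt.of a).lie (IsBrkt.of b)).lie (IsBrkt.of c))⟩

/-- The symplectic element `ω = Σᵢ [aᵢ, bᵢ] ∈ 𝔏₂`. -/
def omegaL (g : ℕ) : L g := ∑ i : Fin g, ⁅toL g (aV g i), toL g (bV g i)⁆

lemma omegaL_mem (g : ℕ) : omegaL g ∈ homog g 2 :=
  Submodule.sum_mem _ fun i _ =>
    Submodule.subset_span ((IsBrkt.of (aV g i)).lie (IsBrkt.of (bV g i)))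

/-- The Lie ideal `⟨⟨ω⟩⟩` of `𝔏` generated by `ω`. -/
def omegaIdeal (g : ℕ) : LieIdeal ℤ (L g) := LieSubmodule.lieSpan ℤ (L g) {omegaL g}

end

noncomputable section

lemma omegaBr_mem (g : ℕ) (h : H g) : ⁅omegaL g, toL g h⁆ ∈ homog g 3 := by
  have h2 : (3 : ℕ) = 2 + 1 := rfl
  rw [h2]
  exact lie_mem_homog (omegaL_mem g) (toL_mem g h)

/-- The map `H → 𝔏₃`, `h ↦ [ω, h]`, induced by the bracket with `ω`. -/
def omBrL (g : ℕ) : H g →ₗ[ℤ] ↥(homog g 3) :=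
  LinearMap.codRestrict (homog g 3)
    ((LieAlgebra.ad ℤ (L g) (omegaL g)).comp (toL g))
    (fun h => by simpa using omegaBr_mem g h)

lemma sum_lie' {L : Type*} [LieRing L] {ι : Type*} [DecidableEq ι] (s : Finset ι) (f : ι → L) (y : L) :
    ⁅∑ i ∈ s, f i, y⁆ = ∑ i ∈ s, ⁅f i, y⁆ := by
  induction s using Finset.induction with
  | empty => simp
  | insert _ _ h ih => rw [Finset.sum_insert h, Finset.sum_insert h, add_lie, ih]

lemma omBrL_eq_sum_trip (g : ℕ) (h : H g) :
    omBrL g h = ∑ i : Fin g, trip g (aV g i) (bV g i) h := by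
  apply Subtype.ext
  show ⁅omegaL g, toL g h⁆ = _
  rw [omegaL, sum_lie']
  push_cast [trip]
  rfl

lemma aIdx_ne_bIdx (g : ℕ) (i j : Fin g) : aIdx g i ≠ bIdx g j := by
  have := i.2
  simp [aIdx, bIdx, Fin.ext_iff]; omega

lemma aIdx_inj (g : ℕ) {i j : Fin g} (h : aIdx g i = aIdx g j) : i = j := by
  simpa [aIdx, Fin.ext_iff] using h

lemma bIdx_inj (g : ℕ) {i j : Fin g} (h : bIdx g i = bIdx g j) : i = j := by
  simp only [bIdx, Fin.ext_iff] at h ⊢; omega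

lemma omegaPair_aV (g : ℕ) (i : Fin g) (h : H g) :
    omegaPair g (aV g i) h = h (bIdx g i) := by
  rw [omegaPair, Finset.sum_eq_single i]
  · simp [aV, Pi.single_apply, (aIdx_ne_bIdx g i i)]
  · intro j _ hj
    have h1 : aIdx g i ≠ aIdx g j := fun e => hj (aIdx_inj g e).symm
    have h2 : aIdx g i ≠ bIdx g j := aIdx_ne_bIdx g i j
    simp [aV, Pi.single_apply, h1, h2]
  · simp

lemma omegaPair_bV (g : ℕ) (i : Fin g) (h : H g) :
    omegaPair g (bV g i) h = -h (aIdx g i) := by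
  rw [omegaPair, Finset.sum_eq_single i]
  · simp [bV, Pi.single_apply, (aIdx_ne_bIdx g i i).symm]
  · intro j _ hj
    have h1 : bIdx g i ≠ aIdx g j := (aIdx_ne_bIdx g j i).symm
    have h2 : bIdx g i ≠ bIdx g j := fun e => hj (bIdx_inj g e).symm
    simp [bV, Pi.single_apply, h1, h2]
  · simp

lemma H_decomp (g : ℕ) (h : H g) :
    ∑ i : Fin g, (h (aIdx g i) • aV g i + h (bIdx g i) • bV g i) = h := by
  funext j
  rw [Finset.sum_apply]
  by_cases hj : (j : ℕ) < g
  · rw [Finset.sum_eq_single ⟨j, hj⟩]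
    · have e1 : aIdx g ⟨j, hj⟩ = j := by simp [aIdx]
      have e2 : bIdx g ⟨j, hj⟩ ≠ j := by simp [bIdx, Fin.ext_iff]; omega
      simp [aV, bV, e1, Pi.single_apply, e2]
    · intro i _ hi
      have h1 : aIdx g i ≠ j := by
        intro e
        exact hi (by apply Fin.ext; simpa [aIdx] using congrArg Fin.val e)
      have h2 : bIdx g i ≠ j := by simp [bIdx, Fin.ext_iff]; omega
      simp [aV, bV, Pi.single_apply, h1, h2]
    · simp
  · have hj2 := j.2
    have hjg : g ≤ (j : ℕ) := le_of_not_gt hj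
    rw [Finset.sum_eq_single ⟨(j : ℕ) - g, by omega⟩]
    · have e1 : aIdx g ⟨(j:ℕ) - g, by omega⟩ ≠ j := by
        simp [aIdx, Fin.ext_iff]; omega
      have e2 : bIdx g ⟨(j:ℕ) - g, by omega⟩ = j := by
        simp [bIdx, Fin.ext_iff]; omega
      simp [aV, bV, e1, e2, Pi.single_apply]
    · intro i _ hi
      have h1 : aIdx g i ≠ j := by simp [aIdx, Fin.ext_iff]; omega
      have h2 : bIdx g i ≠ j := by
        intro e
        apply hi
        apply Fin.ext
        have hv := congrArg Fin.val e
        simp only [bIdx] at hv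
        show (i : ℕ) = (j : ℕ) - g
        omega
      simp [aV, bV, Pi.single_apply, h1, h2]
    · simp

lemma two_smul_tmul_one {M : Type*} [AddCommGroup M] [Module ℤ M] (v : M) :
    (2 : ℤ) • (v ⊗ₜ[ℤ] (1 : ZMod 2)) = 0 := by
  rw [show ((2:ℤ)) = ((1:ℤ) + 1) from rfl, add_smul, one_smul, ← TensorProduct.tmul_add]
  rw [show ((1:ZMod 2) + 1) = 0 from by decide, TensorProduct.tmul_zero]

lemma zsmul_tmul_one (g : ℕ) (n : ℤ) (v : H g) :
    n • (v ⊗ₜ[ℤ] (1 : ZMod 2)) = (n • v) ⊗ₜ[ℤ] (1 : ZMod 2) := by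
  rw [TensorProduct.smul_tmul']

lemma neg_smul_tmul_one (g : ℕ) (n : ℤ) (v : H g) :
    (-n) • (v ⊗ₜ[ℤ] (1 : ZMod 2)) = n • (v ⊗ₜ[ℤ] (1 : ZMod 2)) := by
  have e : (-n : ℤ) = n - n * 2 := by ring
  rw [e, sub_smul, mul_smul, two_smul_tmul_one, smul_zero, sub_zero]

lemma tmul_eq_val_smul {M : Type*} [AddCommGroup M] [Module ℤ M] (v : M) (z : ZMod 2) :
    v ⊗ₜ[ℤ] z = ((z.val : ℤ)) • (v ⊗ₜ[ℤ] (1 : ZMod 2)) := by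
  fin_cases z
  · show v ⊗ₜ[ℤ] (0 : ZMod 2) = (((0 : ZMod 2).val : ℤ)) • (v ⊗ₜ[ℤ] (1 : ZMod 2))
    rw [show ((0 : ZMod 2).val : ℤ) = 0 from rfl, zero_smul, TensorProduct.tmul_zero]
  · show v ⊗ₜ[ℤ] (1 : ZMod 2) = (((1 : ZMod 2).val : ℤ)) • (v ⊗ₜ[ℤ] (1 : ZMod 2))
    rw [show ((1 : ZMod 2).val : ℤ) = 1 from rfl, one_smul]

/-- `σ([ω,h] ⊗ 1) = h ⊗ 1` for every `h ∈ H`; in particular `σ` is a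
retraction of the map `H ⊗ ℤ/2ℤ → 𝔏₃ ⊗ ℤ/2ℤ` induced by `h ↦ [ω,h]`. -/
theorem stmt1 (g : ℕ) (hg : 1 ≤ g)
    (σ : (↥(homog g 3) ⊗[ℤ] ZMod 2) →ₗ[ℤ] (H g ⊗[ℤ] ZMod 2))
    (hσ : ∀ a b c : H g,
      σ (trip g a b c ⊗ₜ (1 : ZMod 2)) =
        omegaPair g b c • (a ⊗ₜ (1 : ZMod 2)) + omegaPair g a c • (b ⊗ₜ (1 : ZMod 2))) :
    (∀ h : H g, σ (omBrL g h ⊗ₜ (1 : ZMod 2)) = h ⊗ₜ (1 : ZMod 2)) ∧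
    σ.comp (LinearMap.rTensor (ZMod 2) (omBrL g)) = LinearMap.id := by
  have main : ∀ h : H g, σ (omBrL g h ⊗ₜ (1 : ZMod 2)) = h ⊗ₜ (1 : ZMod 2) := by
    intro h
    rw [omBrL_eq_sum_trip, TensorProduct.sum_tmul, map_sum]
    have step : ∀ i : Fin g,
        σ (trip g (aV g i) (bV g i) h ⊗ₜ (1 : ZMod 2)) =
          (h (aIdx g i) • aV g i + h (bIdx g i) • bV g i) ⊗ₜ[ℤ] (1 : ZMod 2) := by
      intro i
      rw [hσ, omegaPair_aV, omegaPair_bV, neg_smul_tmul_one,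
        zsmul_tmul_one, zsmul_tmul_one, ← TensorProduct.add_tmul]
    simp only [step]
    rw [← TensorProduct.sum_tmul, H_decomp]
  refine ⟨main, ?_⟩
  apply TensorProduct.ext'
  intro h z
  have hz' := tmul_eq_val_smul h z
  have hz'' := tmul_eq_val_smul (omBrL g h) z
  show σ (omBrL g h ⊗ₜ z) = h ⊗ₜ z
  rw [hz'', map_smul, main, ← hz']

end
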